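/- arXiv:0910.4004 — 6 statements merged into one kernel-verified Lean document; each statement's English description precedes it below -/
import Mathlib

section
/- Let u, v : ℝ³ → ℝ be smooth functions of (x,y,t). For smooth functions Ψ : ℝ⁴ → ℝ of (x,y,t,p), define the first-order operators D₁Ψ = Ψ_y − (p − v_x)Ψ_x + u_x Ψ_p and D₂Ψ = Ψ_t − (p² − v_x p + u − v_y)Ψ_x + (u_x p + u_y)Ψ_p (here u, v and their derivatives are evaluated at (x,y,t) and subscripts denote partial derivatives). Then D₁(D₂Ψ) = D₂(D₁Ψ) holds for every smooth Ψ at every point (x,y,t,p) if and only if u and v satisfy the Manakov–Santini system: u_{xt} = u_{yy} + (u u_x)_x + v_x u_{xy} − u_{xx} v_y and v_{xt} = v_{yy} + u v_{xx} + v_x v_{xy} − v_{xx} v_y. -/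
/-- Partial derivative in the first coordinate `x` of a function on `ℝ³ = (x,y,t)`. -/
noncomputable def pd3x (f : ℝ × ℝ × ℝ → ℝ) (r : ℝ × ℝ × ℝ) : ℝ :=
  deriv (fun s => f (s, r.2.1, r.2.2)) r.1

/-- Partial derivative in the second coordinate `y` of a function on `ℝ³ = (x,y,t)`. -/
noncomputable def pd3y (f : ℝ × ℝ × ℝ → ℝ) (r : ℝ × ℝ × ℝ) : ℝ :=
  deriv (fun s => f (r.1, s, r.2.2)) r.2.1

/-- Partial derivative in the third coordinate `t` of a function on `ℝ³ = (x,y,t)`. -/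
noncomputable def pd3t (f : ℝ × ℝ × ℝ → ℝ) (r : ℝ × ℝ × ℝ) : ℝ :=
  deriv (fun s => f (r.1, r.2.1, s)) r.2.2

/-- Partial derivative in `x` of a function on `ℝ⁴ = (x,y,t,p)`. -/
noncomputable def pd4x (f : ℝ × ℝ × ℝ × ℝ → ℝ) (q : ℝ × ℝ × ℝ × ℝ) : ℝ :=
  deriv (fun s => f (s, q.2.1, q.2.2.1, q.2.2.2)) q.1

/-- Partial derivative in `y` of a function on `ℝ⁴ = (x,y,t,p)`. -/
noncomputable def pd4y (f : ℝ × ℝ × ℝ × ℝ → ℝ) (q : ℝ × ℝ × ℝ × ℝ) : ℝ :=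
  deriv (fun s => f (q.1, s, q.2.2.1, q.2.2.2)) q.2.1

/-- Partial derivative in `t` of a function on `ℝ⁴ = (x,y,t,p)`. -/
noncomputable def pd4t (f : ℝ × ℝ × ℝ × ℝ → ℝ) (q : ℝ × ℝ × ℝ × ℝ) : ℝ :=
  deriv (fun s => f (q.1, q.2.1, s, q.2.2.2)) q.2.2.1

/-- Partial derivative in the spectral variable `p` of a function on `ℝ⁴ = (x,y,t,p)`. -/
noncomputable def pd4p (f : ℝ × ℝ × ℝ × ℝ → ℝ) (q : ℝ × ℝ × ℝ × ℝ) : ℝ :=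
  deriv (fun s => f (q.1, q.2.1, q.2.2.1, s)) q.2.2.2

/-- First Lax operator of the Manakov–Santini system:
`D₁Ψ = Ψ_y − (p − v_x)Ψ_x + u_x Ψ_p`. -/
noncomputable def msD1 (u v : ℝ × ℝ × ℝ → ℝ) (Ψ : ℝ × ℝ × ℝ × ℝ → ℝ)
    (q : ℝ × ℝ × ℝ × ℝ) : ℝ :=
  pd4y Ψ q - (q.2.2.2 - pd3x v (q.1, q.2.1, q.2.2.1)) * pd4x Ψ q
    + pd3x u (q.1, q.2.1, q.2.2.1) * pd4p Ψ q

/-- Second Lax operator of the Manakov–Santini system: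
`D₂Ψ = Ψ_t − (p² − v_x p + u − v_y)Ψ_x + (u_x p + u_y)Ψ_p`. -/
noncomputable def msD2 (u v : ℝ × ℝ × ℝ → ℝ) (Ψ : ℝ × ℝ × ℝ × ℝ → ℝ)
    (q : ℝ × ℝ × ℝ × ℝ) : ℝ :=
  pd4t Ψ q
    - (q.2.2.2 ^ 2 - pd3x v (q.1, q.2.1, q.2.2.1) * q.2.2.2 + u (q.1, q.2.1, q.2.2.1)
        - pd3y v (q.1, q.2.1, q.2.2.1)) * pd4x Ψ q
    + (pd3x u (q.1, q.2.1, q.2.2.1) * q.2.2.2 + pd3y u (q.1, q.2.1, q.2.2.1)) * pd4p Ψ q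

section MSInfra

variable {E : Type*} [NormedAddCommGroup E] [NormedSpace ℝ E]

lemma MS.one_le_coetop : (1 : WithTop ℕ∞) ≤ ((⊤:ℕ∞) : WithTop ℕ∞) := WithTop.coe_le_coe.2 le_top

/-- Directional derivative. -/
noncomputable def dd (w : E) (f : E → ℝ) (q : E) : ℝ := fderiv ℝ f q w

lemma MS.sdiff {f : E → ℝ} (hf : ContDiff ℝ (⊤ : ℕ∞) f) (q : E) : DifferentiableAt ℝ f q :=
  (hf.differentiable (by simp)) q

lemma dd_add {f g : E → ℝ} {q : E} (hf : DifferentiableAt ℝ f q) (hg : DifferentiableAt ℝ g q)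
    (w : E) : dd w (fun x => f x + g x) q = dd w f q + dd w g q := by
  simp [dd, fderiv_fun_add hf hg]

lemma dd_sub {f g : E → ℝ} {q : E} (hf : DifferentiableAt ℝ f q) (hg : DifferentiableAt ℝ g q)
    (w : E) : dd w (fun x => f x - g x) q = dd w f q - dd w g q := by
  simp [dd, fderiv_fun_sub hf hg]

lemma dd_mul {f g : E → ℝ} {q : E} (hf : DifferentiableAt ℝ f q) (hg : DifferentiableAt ℝ g q)
    (w : E) : dd w (fun x => f x * g x) q = dd w f q * g q + f q * dd w g q := by
  simp [dd, fderiv_fun_mul hf hg, mul_comm]; ring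

lemma dd_smooth {f : E → ℝ} (hf : ContDiff ℝ (⊤ : ℕ∞) f) (w : E) :
    ContDiff ℝ (⊤ : ℕ∞) (dd w f) :=
  (hf.fderiv_right (m := (⊤:ℕ∞)) (by simp)).clm_apply contDiff_const

lemma dd_comm {f : E → ℝ} (hf : ContDiff ℝ (⊤ : ℕ∞) f) (w w' : E) (q : E) :
    dd w (dd w' f) q = dd w' (dd w f) q := by
  have hd : DifferentiableAt ℝ (fderiv ℝ f) q :=
    ((hf.fderiv_right (m := (⊤:ℕ∞)) (by simp)).differentiable (by simp)) q
  have h1 : ∀ a b : E, dd a (dd b f) q = fderiv ℝ (fderiv ℝ f) q a b := by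
    intro a b
    have : dd b f = fun x => (fderiv ℝ f x) b := rfl
    rw [dd, this, fderiv_clm_apply hd (differentiableAt_const _)]
    simp
  rw [h1, h1]
  exact (hf.contDiffAt.isSymmSndFDerivAt (by simp; exact WithTop.coe_le_coe.2 le_top)) w w'

end MSInfra

namespace MS

/-- Projection `ℝ⁴ → ℝ³`. -/
def pr (x : ℝ × ℝ × ℝ × ℝ) : ℝ × ℝ × ℝ := (x.1, x.2.1, x.2.2.1)

def prL : (ℝ × ℝ × ℝ × ℝ) →L[ℝ] (ℝ × ℝ × ℝ) :=
  (ContinuousLinearMap.fst ℝ ℝ (ℝ × ℝ × ℝ)).prod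
    (((ContinuousLinearMap.fst ℝ ℝ (ℝ × ℝ)).comp (ContinuousLinearMap.snd ℝ ℝ (ℝ × ℝ × ℝ))).prod
      ((ContinuousLinearMap.fst ℝ ℝ ℝ).comp
        ((ContinuousLinearMap.snd ℝ ℝ (ℝ × ℝ)).comp (ContinuousLinearMap.snd ℝ ℝ (ℝ × ℝ × ℝ)))))

lemma prL_apply (x : ℝ × ℝ × ℝ × ℝ) : prL x = pr x := rfl

def p4L : (ℝ × ℝ × ℝ × ℝ) →L[ℝ] ℝ :=
  (ContinuousLinearMap.snd ℝ ℝ ℝ).comp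
    ((ContinuousLinearMap.snd ℝ ℝ (ℝ × ℝ)).comp (ContinuousLinearMap.snd ℝ ℝ (ℝ × ℝ × ℝ)))

lemma p4L_apply (x : ℝ × ℝ × ℝ × ℝ) : p4L x = x.2.2.2 := rfl

lemma p4_smooth : ContDiff ℝ (⊤ : ℕ∞) (fun x : ℝ × ℝ × ℝ × ℝ => x.2.2.2) := p4L.contDiff

lemma p4_diffAt (q : ℝ × ℝ × ℝ × ℝ) :
    DifferentiableAt ℝ (fun x : ℝ × ℝ × ℝ × ℝ => x.2.2.2) q := MS.sdiff p4_smooth q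

lemma dd_p4 (w q : ℝ × ℝ × ℝ × ℝ) : dd w (fun x : ℝ × ℝ × ℝ × ℝ => x.2.2.2) q = w.2.2.2 := by
  rw [dd, show (fun x : ℝ × ℝ × ℝ × ℝ => x.2.2.2) = ⇑p4L from rfl, p4L.fderiv]; rfl

lemma x1_smooth : ContDiff ℝ (⊤ : ℕ∞) (fun x : ℝ × ℝ × ℝ × ℝ => x.1) :=
  (ContinuousLinearMap.fst ℝ ℝ (ℝ × ℝ × ℝ)).contDiff

lemma dd_x1 (w q : ℝ × ℝ × ℝ × ℝ) : dd w (fun x : ℝ × ℝ × ℝ × ℝ => x.1) q = w.1 := by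
  rw [dd, show (fun x : ℝ × ℝ × ℝ × ℝ => x.1)
      = ⇑(ContinuousLinearMap.fst ℝ ℝ (ℝ × ℝ × ℝ)) from rfl,
    ContinuousLinearMap.fderiv]; rfl

lemma comp_pr_smooth {g : ℝ × ℝ × ℝ → ℝ} (hg : ContDiff ℝ (⊤ : ℕ∞) g) :
    ContDiff ℝ (⊤ : ℕ∞) (fun x => g (pr x)) := hg.comp prL.contDiff

lemma comp_pr_diffAt {g : ℝ × ℝ × ℝ → ℝ} (hg : ContDiff ℝ (⊤ : ℕ∞) g) (q : ℝ × ℝ × ℝ × ℝ) :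
    DifferentiableAt ℝ (fun x => g (pr x)) q := MS.sdiff (comp_pr_smooth hg) q

lemma dd_comp_pr {g : ℝ × ℝ × ℝ → ℝ} {q : ℝ × ℝ × ℝ × ℝ}
    (hg : DifferentiableAt ℝ g (pr q)) (w : ℝ × ℝ × ℝ × ℝ) :
    dd w (fun x => g (pr x)) q = dd (pr w) g (pr q) := by
  have h : HasFDerivAt (fun x => g (pr x)) ((fderiv ℝ g (pr q)).comp prL) q :=
    hg.hasFDerivAt.comp q prL.hasFDerivAt
  rw [dd, h.fderiv, ContinuousLinearMap.comp_apply, prL_apply, dd]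

lemma dd_zero3 (f : ℝ × ℝ × ℝ → ℝ) (r : ℝ × ℝ × ℝ) :
    dd ((0, 0, 0) : ℝ × ℝ × ℝ) f r = 0 := by
  rw [show ((0,0,0) : ℝ × ℝ × ℝ) = 0 from rfl]; simp [dd]

end MS

namespace MS

lemma pd4x_eq {f : ℝ × ℝ × ℝ × ℝ → ℝ} {q : ℝ × ℝ × ℝ × ℝ} (hf : DifferentiableAt ℝ f q) :
    pd4x f q = dd ((1, 0, 0, 0) : ℝ × ℝ × ℝ × ℝ) f q := by
  have hL : HasDerivAt (fun s : ℝ => ((s, q.2.1, q.2.2.1, q.2.2.2) : ℝ × ℝ × ℝ × ℝ))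
      ((1, 0, 0, 0) : ℝ × ℝ × ℝ × ℝ) q.1 :=
    (hasDerivAt_id _).prodMk (hasDerivAt_const _ _)
  exact (hf.hasFDerivAt.comp_hasDerivAt q.1 hL).deriv

lemma pd4y_eq {f : ℝ × ℝ × ℝ × ℝ → ℝ} {q : ℝ × ℝ × ℝ × ℝ} (hf : DifferentiableAt ℝ f q) :
    pd4y f q = dd ((0, 1, 0, 0) : ℝ × ℝ × ℝ × ℝ) f q := by
  have hL : HasDerivAt (fun s : ℝ => ((q.1, s, q.2.2.1, q.2.2.2) : ℝ × ℝ × ℝ × ℝ))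
      ((0, 1, 0, 0) : ℝ × ℝ × ℝ × ℝ) q.2.1 :=
    (hasDerivAt_const _ _).prodMk ((hasDerivAt_id _).prodMk (hasDerivAt_const _ _))
  exact (hf.hasFDerivAt.comp_hasDerivAt q.2.1 hL).deriv

lemma pd4t_eq {f : ℝ × ℝ × ℝ × ℝ → ℝ} {q : ℝ × ℝ × ℝ × ℝ} (hf : DifferentiableAt ℝ f q) :
    pd4t f q = dd ((0, 0, 1, 0) : ℝ × ℝ × ℝ × ℝ) f q := by
  have hL : HasDerivAt (fun s : ℝ => ((q.1, q.2.1, s, q.2.2.2) : ℝ × ℝ × ℝ × ℝ))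
      ((0, 0, 1, 0) : ℝ × ℝ × ℝ × ℝ) q.2.2.1 :=
    (hasDerivAt_const _ _).prodMk
      ((hasDerivAt_const _ _).prodMk ((hasDerivAt_id _).prodMk (hasDerivAt_const _ _)))
  exact (hf.hasFDerivAt.comp_hasDerivAt q.2.2.1 hL).deriv

lemma pd4p_eq {f : ℝ × ℝ × ℝ × ℝ → ℝ} {q : ℝ × ℝ × ℝ × ℝ} (hf : DifferentiableAt ℝ f q) :
    pd4p f q = dd ((0, 0, 0, 1) : ℝ × ℝ × ℝ × ℝ) f q := by
  have hL : HasDerivAt (fun s : ℝ => ((q.1, q.2.1, q.2.2.1, s) : ℝ × ℝ × ℝ × ℝ))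
      ((0, 0, 0, 1) : ℝ × ℝ × ℝ × ℝ) q.2.2.2 :=
    (hasDerivAt_const _ _).prodMk
      ((hasDerivAt_const _ _).prodMk ((hasDerivAt_const _ _).prodMk (hasDerivAt_id _)))
  exact (hf.hasFDerivAt.comp_hasDerivAt q.2.2.2 hL).deriv

lemma pd3x_eq {f : ℝ × ℝ × ℝ → ℝ} {r : ℝ × ℝ × ℝ} (hf : DifferentiableAt ℝ f r) :
    pd3x f r = dd ((1, 0, 0) : ℝ × ℝ × ℝ) f r := by
  have hL : HasDerivAt (fun s : ℝ => ((s, r.2.1, r.2.2) : ℝ × ℝ × ℝ))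
      ((1, 0, 0) : ℝ × ℝ × ℝ) r.1 :=
    (hasDerivAt_id _).prodMk (hasDerivAt_const _ _)
  exact (hf.hasFDerivAt.comp_hasDerivAt r.1 hL).deriv

lemma pd3y_eq {f : ℝ × ℝ × ℝ → ℝ} {r : ℝ × ℝ × ℝ} (hf : DifferentiableAt ℝ f r) :
    pd3y f r = dd ((0, 1, 0) : ℝ × ℝ × ℝ) f r := by
  have hL : HasDerivAt (fun s : ℝ => ((r.1, s, r.2.2) : ℝ × ℝ × ℝ))
      ((0, 1, 0) : ℝ × ℝ × ℝ) r.2.1 :=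
    (hasDerivAt_const _ _).prodMk ((hasDerivAt_id _).prodMk (hasDerivAt_const _ _))
  exact (hf.hasFDerivAt.comp_hasDerivAt r.2.1 hL).deriv

lemma pd3t_eq {f : ℝ × ℝ × ℝ → ℝ} {r : ℝ × ℝ × ℝ} (hf : DifferentiableAt ℝ f r) :
    pd3t f r = dd ((0, 0, 1) : ℝ × ℝ × ℝ) f r := by
  have hL : HasDerivAt (fun s : ℝ => ((r.1, r.2.1, s) : ℝ × ℝ × ℝ))
      ((0, 0, 1) : ℝ × ℝ × ℝ) r.2.2 :=
    (hasDerivAt_const _ _).prodMk ((hasDerivAt_const _ _).prodMk (hasDerivAt_id _))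
  exact (hf.hasFDerivAt.comp_hasDerivAt r.2.2 hL).deriv

end MS


namespace MS

variable (u v : ℝ × ℝ × ℝ → ℝ)

noncomputable def cA1 (q : ℝ × ℝ × ℝ × ℝ) : ℝ :=
  q.2.2.2 - dd ((1,0,0) : ℝ × ℝ × ℝ) v (pr q)
noncomputable def cB1 (q : ℝ × ℝ × ℝ × ℝ) : ℝ := dd ((1,0,0) : ℝ × ℝ × ℝ) u (pr q)
noncomputable def cA2 (q : ℝ × ℝ × ℝ × ℝ) : ℝ :=
  q.2.2.2 * q.2.2.2 - dd ((1,0,0) : ℝ × ℝ × ℝ) v (pr q) * q.2.2.2 + u (pr q)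
    - dd ((0,1,0) : ℝ × ℝ × ℝ) v (pr q)
noncomputable def cB2 (q : ℝ × ℝ × ℝ × ℝ) : ℝ :=
  dd ((1,0,0) : ℝ × ℝ × ℝ) u (pr q) * q.2.2.2 + dd ((0,1,0) : ℝ × ℝ × ℝ) u (pr q)

noncomputable def msOp (a : ℝ × ℝ × ℝ × ℝ) (A B Ψ : ℝ × ℝ × ℝ × ℝ → ℝ)
    (q : ℝ × ℝ × ℝ × ℝ) : ℝ :=
  dd a Ψ q - A q * dd ((1,0,0,0) : ℝ × ℝ × ℝ × ℝ) Ψ q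
    + B q * dd ((0,0,0,1) : ℝ × ℝ × ℝ × ℝ) Ψ q

variable {u v}

lemma cA1_smooth (hv : ContDiff ℝ (⊤ : ℕ∞) v) : ContDiff ℝ (⊤ : ℕ∞) (cA1 v) :=
  p4_smooth.sub (comp_pr_smooth (dd_smooth hv _))

lemma cB1_smooth (hu : ContDiff ℝ (⊤ : ℕ∞) u) : ContDiff ℝ (⊤ : ℕ∞) (cB1 u) :=
  comp_pr_smooth (dd_smooth hu _)

lemma cA2_smooth (hu : ContDiff ℝ (⊤ : ℕ∞) u) (hv : ContDiff ℝ (⊤ : ℕ∞) v) :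
    ContDiff ℝ (⊤ : ℕ∞) (cA2 u v) :=
  (((p4_smooth.mul p4_smooth).sub ((comp_pr_smooth (dd_smooth hv _)).mul p4_smooth)).add
    (comp_pr_smooth hu)).sub (comp_pr_smooth (dd_smooth hv _))

lemma cB2_smooth (hu : ContDiff ℝ (⊤ : ℕ∞) u) : ContDiff ℝ (⊤ : ℕ∞) (cB2 u) :=
  ((comp_pr_smooth (dd_smooth hu _)).mul p4_smooth).add (comp_pr_smooth (dd_smooth hu _))

lemma msOp_smooth {a : ℝ × ℝ × ℝ × ℝ} {A B Ψ : ℝ × ℝ × ℝ × ℝ → ℝ}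
    (hA : ContDiff ℝ (⊤ : ℕ∞) A) (hB : ContDiff ℝ (⊤ : ℕ∞) B)
    (hΨ : ContDiff ℝ (⊤ : ℕ∞) Ψ) : ContDiff ℝ (⊤ : ℕ∞) (msOp a A B Ψ) :=
  ((dd_smooth hΨ a).sub (hA.mul (dd_smooth hΨ _))).add (hB.mul (dd_smooth hΨ _))

lemma dd_cA1 (hv : ContDiff ℝ (⊤ : ℕ∞) v) (w q : ℝ × ℝ × ℝ × ℝ) :
    dd w (cA1 v) q = w.2.2.2 - dd (pr w) (dd ((1,0,0) : ℝ × ℝ × ℝ) v) (pr q) := by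
  unfold cA1
  rw [dd_sub (p4_diffAt q) (comp_pr_diffAt (dd_smooth hv _) q), dd_p4,
    dd_comp_pr (MS.sdiff (dd_smooth hv _) _)]

lemma dd_cB1 (hu : ContDiff ℝ (⊤ : ℕ∞) u) (w q : ℝ × ℝ × ℝ × ℝ) :
    dd w (cB1 u) q = dd (pr w) (dd ((1,0,0) : ℝ × ℝ × ℝ) u) (pr q) := by
  unfold cB1
  rw [dd_comp_pr (MS.sdiff (dd_smooth hu _) _)]

lemma dd_cA2 (hu : ContDiff ℝ (⊤ : ℕ∞) u) (hv : ContDiff ℝ (⊤ : ℕ∞) v) (w q : ℝ × ℝ × ℝ × ℝ) :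
    dd w (cA2 u v) q
      = (w.2.2.2 * q.2.2.2 + q.2.2.2 * w.2.2.2)
        - (dd (pr w) (dd ((1,0,0) : ℝ × ℝ × ℝ) v) (pr q) * q.2.2.2
            + dd ((1,0,0) : ℝ × ℝ × ℝ) v (pr q) * w.2.2.2)
        + dd (pr w) u (pr q) - dd (pr w) (dd ((0,1,0) : ℝ × ℝ × ℝ) v) (pr q) := by
  unfold cA2
  have hp4 := p4_diffAt q
  have hVX := comp_pr_diffAt (dd_smooth hv ((1,0,0) : ℝ × ℝ × ℝ)) q
  have hU := comp_pr_diffAt hu q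
  have hVY := comp_pr_diffAt (dd_smooth hv ((0,1,0) : ℝ × ℝ × ℝ)) q
  rw [dd_sub (((hp4.fun_mul hp4).fun_sub (hVX.fun_mul hp4)).fun_add hU) hVY,
    dd_add ((hp4.fun_mul hp4).fun_sub (hVX.fun_mul hp4)) hU,
    dd_sub (hp4.fun_mul hp4) (hVX.fun_mul hp4), dd_mul hp4 hp4, dd_mul hVX hp4, dd_p4,
    dd_comp_pr (MS.sdiff (dd_smooth hv _) _), dd_comp_pr (MS.sdiff (dd_smooth hv _) _),
    dd_comp_pr (MS.sdiff hu _)]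

lemma dd_cB2 (hu : ContDiff ℝ (⊤ : ℕ∞) u) (w q : ℝ × ℝ × ℝ × ℝ) :
    dd w (cB2 u) q
      = (dd (pr w) (dd ((1,0,0) : ℝ × ℝ × ℝ) u) (pr q) * q.2.2.2
          + dd ((1,0,0) : ℝ × ℝ × ℝ) u (pr q) * w.2.2.2)
        + dd (pr w) (dd ((0,1,0) : ℝ × ℝ × ℝ) u) (pr q) := by
  unfold cB2
  have hp4 := p4_diffAt q
  have hUX := comp_pr_diffAt (dd_smooth hu ((1,0,0) : ℝ × ℝ × ℝ)) q
  have hUY := comp_pr_diffAt (dd_smooth hu ((0,1,0) : ℝ × ℝ × ℝ)) q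
  rw [dd_add (hUX.fun_mul hp4) hUY, dd_mul hUX hp4, dd_p4,
    dd_comp_pr (MS.sdiff (dd_smooth hu _) _), dd_comp_pr (MS.sdiff (dd_smooth hu _) _)]

lemma dd_msOp {A B Ψ : ℝ × ℝ × ℝ × ℝ → ℝ}
    (hA : ContDiff ℝ (⊤ : ℕ∞) A) (hB : ContDiff ℝ (⊤ : ℕ∞) B)
    (hΨ : ContDiff ℝ (⊤ : ℕ∞) Ψ) (a w q : ℝ × ℝ × ℝ × ℝ) :
    dd w (msOp a A B Ψ) q
      = dd w (dd a Ψ) q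
        - (dd w A q * dd ((1,0,0,0) : ℝ × ℝ × ℝ × ℝ) Ψ q
            + A q * dd w (dd ((1,0,0,0) : ℝ × ℝ × ℝ × ℝ) Ψ) q)
        + (dd w B q * dd ((0,0,0,1) : ℝ × ℝ × ℝ × ℝ) Ψ q
            + B q * dd w (dd ((0,0,0,1) : ℝ × ℝ × ℝ × ℝ) Ψ) q) := by
  unfold msOp
  have h1 := MS.sdiff (dd_smooth hΨ a) q
  have h2 := MS.sdiff (dd_smooth hΨ ((1,0,0,0) : ℝ × ℝ × ℝ × ℝ)) q
  have h3 := MS.sdiff (dd_smooth hΨ ((0,0,0,1) : ℝ × ℝ × ℝ × ℝ)) q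
  have hA' := MS.sdiff hA q
  have hB' := MS.sdiff hB q
  rw [dd_add (h1.fun_sub (hA'.fun_mul h2)) (hB'.fun_mul h3), dd_sub h1 (hA'.fun_mul h2),
    dd_mul hA' h2, dd_mul hB' h3]

end MS

namespace MS

variable {u v : ℝ × ℝ × ℝ → ℝ}

lemma msD1_eq (hu : ContDiff ℝ (⊤ : ℕ∞) u) (hv : ContDiff ℝ (⊤ : ℕ∞) v)
    {Ψ : ℝ × ℝ × ℝ × ℝ → ℝ} (hΨ : ContDiff ℝ (⊤ : ℕ∞) Ψ) :
    msD1 u v Ψ = msOp ((0,1,0,0) : ℝ × ℝ × ℝ × ℝ) (cA1 v) (cB1 u) Ψ := by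
  funext q
  unfold msD1 msOp cA1 cB1 pr
  rw [pd4y_eq (MS.sdiff hΨ q), pd4x_eq (MS.sdiff hΨ q), pd4p_eq (MS.sdiff hΨ q),
    pd3x_eq (MS.sdiff hv _), pd3x_eq (MS.sdiff hu _)]

lemma msD2_eq (hu : ContDiff ℝ (⊤ : ℕ∞) u) (hv : ContDiff ℝ (⊤ : ℕ∞) v)
    {Ψ : ℝ × ℝ × ℝ × ℝ → ℝ} (hΨ : ContDiff ℝ (⊤ : ℕ∞) Ψ) :
    msD2 u v Ψ = msOp ((0,0,1,0) : ℝ × ℝ × ℝ × ℝ) (cA2 u v) (cB2 u) Ψ := by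
  funext q
  unfold msD2 msOp cA2 cB2 pr
  rw [pd4t_eq (MS.sdiff hΨ q), pd4x_eq (MS.sdiff hΨ q), pd4p_eq (MS.sdiff hΨ q),
    pd3x_eq (MS.sdiff hv _), pd3x_eq (MS.sdiff hu _), pd3y_eq (MS.sdiff hv _),
    pd3y_eq (MS.sdiff hu _)]
  ring

end MS

namespace MS

variable (u v : ℝ × ℝ × ℝ → ℝ)

/-- Residual of the `u`-equation of the Manakov–Santini system. -/
noncomputable def Ru (r : ℝ × ℝ × ℝ) : ℝ :=
  dd ((0,0,1) : ℝ×ℝ×ℝ) (dd ((1,0,0) : ℝ×ℝ×ℝ) u) r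
    - dd ((0,1,0) : ℝ×ℝ×ℝ) (dd ((0,1,0) : ℝ×ℝ×ℝ) u) r
    - (dd ((1,0,0) : ℝ×ℝ×ℝ) u r * dd ((1,0,0) : ℝ×ℝ×ℝ) u r
        + u r * dd ((1,0,0) : ℝ×ℝ×ℝ) (dd ((1,0,0) : ℝ×ℝ×ℝ) u) r)
    - dd ((1,0,0) : ℝ×ℝ×ℝ) v r * dd ((0,1,0) : ℝ×ℝ×ℝ) (dd ((1,0,0) : ℝ×ℝ×ℝ) u) r
    + dd ((1,0,0) : ℝ×ℝ×ℝ) (dd ((1,0,0) : ℝ×ℝ×ℝ) u) r * dd ((0,1,0) : ℝ×ℝ×ℝ) v r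

/-- Residual of the `v`-equation of the Manakov–Santini system. -/
noncomputable def Rv (r : ℝ × ℝ × ℝ) : ℝ :=
  dd ((0,0,1) : ℝ×ℝ×ℝ) (dd ((1,0,0) : ℝ×ℝ×ℝ) v) r
    - dd ((0,1,0) : ℝ×ℝ×ℝ) (dd ((0,1,0) : ℝ×ℝ×ℝ) v) r
    - u r * dd ((1,0,0) : ℝ×ℝ×ℝ) (dd ((1,0,0) : ℝ×ℝ×ℝ) v) r
    - dd ((1,0,0) : ℝ×ℝ×ℝ) v r * dd ((0,1,0) : ℝ×ℝ×ℝ) (dd ((1,0,0) : ℝ×ℝ×ℝ) v) r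
    + dd ((1,0,0) : ℝ×ℝ×ℝ) (dd ((1,0,0) : ℝ×ℝ×ℝ) v) r * dd ((0,1,0) : ℝ×ℝ×ℝ) v r

variable {u v}

lemma comm_eval (hu : ContDiff ℝ (⊤ : ℕ∞) u) (hv : ContDiff ℝ (⊤ : ℕ∞) v)
    {Ψ : ℝ × ℝ × ℝ × ℝ → ℝ} (hΨ : ContDiff ℝ (⊤ : ℕ∞) Ψ) (q : ℝ × ℝ × ℝ × ℝ) :
    msOp ((0,1,0,0) : ℝ×ℝ×ℝ×ℝ) (cA1 v) (cB1 u)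
        (msOp ((0,0,1,0) : ℝ×ℝ×ℝ×ℝ) (cA2 u v) (cB2 u) Ψ) q
      - msOp ((0,0,1,0) : ℝ×ℝ×ℝ×ℝ) (cA2 u v) (cB2 u)
        (msOp ((0,1,0,0) : ℝ×ℝ×ℝ×ℝ) (cA1 v) (cB1 u) Ψ) q
      = (-(Rv u v (pr q))) * dd ((1,0,0,0) : ℝ×ℝ×ℝ×ℝ) Ψ q
        + (-(Ru u v (pr q))) * dd ((0,0,0,1) : ℝ×ℝ×ℝ×ℝ) Ψ q := by
  have hA1 := cA1_smooth hv
  have hB1 := cB1_smooth hu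
  have hA2 := cA2_smooth hu hv
  have hB2 := cB2_smooth hu
  simp only [msOp]
  simp only [dd_msOp hA2 hB2 hΨ, dd_msOp hA1 hB1 hΨ]
  simp only [dd_cA1 hv, dd_cB1 hu, dd_cA2 hu hv, dd_cB2 hu]
  simp only [show pr ((0,1,0,0) : ℝ×ℝ×ℝ×ℝ) = ((0,1,0) : ℝ×ℝ×ℝ) from rfl,
    show pr ((0,0,1,0) : ℝ×ℝ×ℝ×ℝ) = ((0,0,1) : ℝ×ℝ×ℝ) from rfl,
    show pr ((1,0,0,0) : ℝ×ℝ×ℝ×ℝ) = ((1,0,0) : ℝ×ℝ×ℝ) from rfl,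
    show pr ((0,0,0,1) : ℝ×ℝ×ℝ×ℝ) = ((0,0,0) : ℝ×ℝ×ℝ) from rfl,
    show ((0,1,0,0) : ℝ×ℝ×ℝ×ℝ).2.2.2 = 0 from rfl,
    show ((0,0,1,0) : ℝ×ℝ×ℝ×ℝ).2.2.2 = 0 from rfl,
    show ((1,0,0,0) : ℝ×ℝ×ℝ×ℝ).2.2.2 = 0 from rfl,
    show ((0,0,0,1) : ℝ×ℝ×ℝ×ℝ).2.2.2 = 1 from rfl,
    dd_zero3]
  simp only [cA1, cB1, cA2, cB2, Ru, Rv]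
  rw [show dd ((0,1,0,0) : ℝ×ℝ×ℝ×ℝ) (dd ((1,0,0,0) : ℝ×ℝ×ℝ×ℝ) Ψ) q
      = dd ((1,0,0,0) : ℝ×ℝ×ℝ×ℝ) (dd ((0,1,0,0) : ℝ×ℝ×ℝ×ℝ) Ψ) q from dd_comm hΨ _ _ q,
    show dd ((0,0,0,1) : ℝ×ℝ×ℝ×ℝ) (dd ((0,0,1,0) : ℝ×ℝ×ℝ×ℝ) Ψ) q
      = dd ((0,0,1,0) : ℝ×ℝ×ℝ×ℝ) (dd ((0,0,0,1) : ℝ×ℝ×ℝ×ℝ) Ψ) q from dd_comm hΨ _ _ q,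
    show dd ((0,0,0,1) : ℝ×ℝ×ℝ×ℝ) (dd ((1,0,0,0) : ℝ×ℝ×ℝ×ℝ) Ψ) q
      = dd ((1,0,0,0) : ℝ×ℝ×ℝ×ℝ) (dd ((0,0,0,1) : ℝ×ℝ×ℝ×ℝ) Ψ) q from dd_comm hΨ _ _ q,
    show dd ((0,0,1,0) : ℝ×ℝ×ℝ×ℝ) (dd ((0,1,0,0) : ℝ×ℝ×ℝ×ℝ) Ψ) q
      = dd ((0,1,0,0) : ℝ×ℝ×ℝ×ℝ) (dd ((0,0,1,0) : ℝ×ℝ×ℝ×ℝ) Ψ) q from dd_comm hΨ _ _ q,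
    show dd ((0,0,1,0) : ℝ×ℝ×ℝ×ℝ) (dd ((1,0,0,0) : ℝ×ℝ×ℝ×ℝ) Ψ) q
      = dd ((1,0,0,0) : ℝ×ℝ×ℝ×ℝ) (dd ((0,0,1,0) : ℝ×ℝ×ℝ×ℝ) Ψ) q from dd_comm hΨ _ _ q,
    show dd ((0,0,0,1) : ℝ×ℝ×ℝ×ℝ) (dd ((0,1,0,0) : ℝ×ℝ×ℝ×ℝ) Ψ) q
      = dd ((0,1,0,0) : ℝ×ℝ×ℝ×ℝ) (dd ((0,0,0,1) : ℝ×ℝ×ℝ×ℝ) Ψ) q from dd_comm hΨ _ _ q,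
    show dd ((1,0,0) : ℝ×ℝ×ℝ) (dd ((0,1,0) : ℝ×ℝ×ℝ) v) (pr q)
      = dd ((0,1,0) : ℝ×ℝ×ℝ) (dd ((1,0,0) : ℝ×ℝ×ℝ) v) (pr q) from dd_comm hv _ _ _,
    show dd ((1,0,0) : ℝ×ℝ×ℝ) (dd ((0,1,0) : ℝ×ℝ×ℝ) u) (pr q)
      = dd ((0,1,0) : ℝ×ℝ×ℝ) (dd ((1,0,0) : ℝ×ℝ×ℝ) u) (pr q) from dd_comm hu _ _ _]
  ring

end MS

namespace MS

variable {u v : ℝ × ℝ × ℝ → ℝ}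

lemma pd3_fun_x (hu : ContDiff ℝ (⊤ : ℕ∞) u) : pd3x u = dd ((1,0,0) : ℝ×ℝ×ℝ) u := by
  funext r; exact pd3x_eq (MS.sdiff hu r)

lemma pd3_fun_y (hu : ContDiff ℝ (⊤ : ℕ∞) u) : pd3y u = dd ((0,1,0) : ℝ×ℝ×ℝ) u := by
  funext r; exact pd3y_eq (MS.sdiff hu r)

lemma eqs_iff (hu : ContDiff ℝ (⊤ : ℕ∞) u) (hv : ContDiff ℝ (⊤ : ℕ∞) v) (r : ℝ × ℝ × ℝ) :
    (pd3t (pd3x u) r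
        = pd3y (pd3y u) r + pd3x (fun s => u s * pd3x u s) r
          + pd3x v r * pd3y (pd3x u) r - pd3x (pd3x u) r * pd3y v r
      ∧ pd3t (pd3x v) r
        = pd3y (pd3y v) r + u r * pd3x (pd3x v) r
          + pd3x v r * pd3y (pd3x v) r - pd3x (pd3x v) r * pd3y v r)
    ↔ (Ru u v r = 0 ∧ Rv u v r = 0) := by
  have t1 : pd3t (pd3x u) r = dd ((0,0,1) : ℝ×ℝ×ℝ) (dd ((1,0,0) : ℝ×ℝ×ℝ) u) r := by
    rw [pd3_fun_x hu]; exact pd3t_eq (MS.sdiff (dd_smooth hu _) r)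
  have t2 : pd3y (pd3y u) r = dd ((0,1,0) : ℝ×ℝ×ℝ) (dd ((0,1,0) : ℝ×ℝ×ℝ) u) r := by
    rw [pd3_fun_y hu]; exact pd3y_eq (MS.sdiff (dd_smooth hu _) r)
  have t3 : pd3x (fun s => u s * pd3x u s) r
      = dd ((1,0,0) : ℝ×ℝ×ℝ) u r * dd ((1,0,0) : ℝ×ℝ×ℝ) u r
        + u r * dd ((1,0,0) : ℝ×ℝ×ℝ) (dd ((1,0,0) : ℝ×ℝ×ℝ) u) r := by
    rw [pd3_fun_x hu,
      pd3x_eq ((MS.sdiff hu r).fun_mul (MS.sdiff (dd_smooth hu _) r)),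
      dd_mul (MS.sdiff hu r) (MS.sdiff (dd_smooth hu _) r)]
  have t4 : pd3x v r = dd ((1,0,0) : ℝ×ℝ×ℝ) v r := pd3x_eq (MS.sdiff hv r)
  have t5 : pd3y (pd3x u) r = dd ((0,1,0) : ℝ×ℝ×ℝ) (dd ((1,0,0) : ℝ×ℝ×ℝ) u) r := by
    rw [pd3_fun_x hu]; exact pd3y_eq (MS.sdiff (dd_smooth hu _) r)
  have t6 : pd3x (pd3x u) r = dd ((1,0,0) : ℝ×ℝ×ℝ) (dd ((1,0,0) : ℝ×ℝ×ℝ) u) r := by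
    rw [pd3_fun_x hu]; exact pd3x_eq (MS.sdiff (dd_smooth hu _) r)
  have t7 : pd3y v r = dd ((0,1,0) : ℝ×ℝ×ℝ) v r := pd3y_eq (MS.sdiff hv r)
  have s1 : pd3t (pd3x v) r = dd ((0,0,1) : ℝ×ℝ×ℝ) (dd ((1,0,0) : ℝ×ℝ×ℝ) v) r := by
    rw [pd3_fun_x hv]; exact pd3t_eq (MS.sdiff (dd_smooth hv _) r)
  have s2 : pd3y (pd3y v) r = dd ((0,1,0) : ℝ×ℝ×ℝ) (dd ((0,1,0) : ℝ×ℝ×ℝ) v) r := by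
    rw [pd3_fun_y hv]; exact pd3y_eq (MS.sdiff (dd_smooth hv _) r)
  have s5 : pd3y (pd3x v) r = dd ((0,1,0) : ℝ×ℝ×ℝ) (dd ((1,0,0) : ℝ×ℝ×ℝ) v) r := by
    rw [pd3_fun_x hv]; exact pd3y_eq (MS.sdiff (dd_smooth hv _) r)
  have s6 : pd3x (pd3x v) r = dd ((1,0,0) : ℝ×ℝ×ℝ) (dd ((1,0,0) : ℝ×ℝ×ℝ) v) r := by
    rw [pd3_fun_x hv]; exact pd3x_eq (MS.sdiff (dd_smooth hv _) r)
  rw [t1, t2, t3, t4, t5, t6, t7, s1, s2, s5, s6]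
  unfold Ru Rv
  constructor
  · rintro ⟨h1, h2⟩; constructor <;> linarith
  · rintro ⟨h1, h2⟩; constructor <;> linarith

lemma key (hu : ContDiff ℝ (⊤ : ℕ∞) u) (hv : ContDiff ℝ (⊤ : ℕ∞) v)
    {Ψ : ℝ × ℝ × ℝ × ℝ → ℝ} (hΨ : ContDiff ℝ (⊤ : ℕ∞) Ψ) (q : ℝ × ℝ × ℝ × ℝ) :
    msD1 u v (msD2 u v Ψ) q - msD2 u v (msD1 u v Ψ) q
      = (-(Rv u v (pr q))) * dd ((1,0,0,0) : ℝ×ℝ×ℝ×ℝ) Ψ q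
        + (-(Ru u v (pr q))) * dd ((0,0,0,1) : ℝ×ℝ×ℝ×ℝ) Ψ q := by
  rw [msD2_eq hu hv hΨ, msD1_eq hu hv hΨ,
    msD1_eq hu hv (msOp_smooth (cA2_smooth hu hv) (cB2_smooth hu) hΨ),
    msD2_eq hu hv (msOp_smooth (cA1_smooth hv) (cB1_smooth hu) hΨ)]
  exact comm_eval hu hv hΨ q

end MS


/-- The Lax operators `D₁`, `D₂` commute on all smooth functions `Ψ(x,y,t,p)` if and only if
`u`, `v` satisfy the Manakov–Santini system. -/
theorem manakov_santini_lax_commute_iff (u v : ℝ × ℝ × ℝ → ℝ)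
    (hu : ContDiff ℝ (⊤ : ℕ∞) u) (hv : ContDiff ℝ (⊤ : ℕ∞) v) :
    (∀ Ψ : ℝ × ℝ × ℝ × ℝ → ℝ, ContDiff ℝ (⊤ : ℕ∞) Ψ →
      ∀ q : ℝ × ℝ × ℝ × ℝ, msD1 u v (msD2 u v Ψ) q = msD2 u v (msD1 u v Ψ) q)
    ↔ (∀ r : ℝ × ℝ × ℝ,
        pd3t (pd3x u) r
          = pd3y (pd3y u) r + pd3x (fun s => u s * pd3x u s) r
            + pd3x v r * pd3y (pd3x u) r - pd3x (pd3x u) r * pd3y v r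
        ∧ pd3t (pd3x v) r
          = pd3y (pd3y v) r + u r * pd3x (pd3x v) r
            + pd3x v r * pd3y (pd3x v) r - pd3x (pd3x v) r * pd3y v r) := by
  constructor
  · intro h r
    rw [MS.eqs_iff hu hv r]
    set q : ℝ × ℝ × ℝ × ℝ := (r.1, r.2.1, r.2.2, (0:ℝ)) with hq
    have hpr : MS.pr q = r := rfl
    have hx := MS.key hu hv MS.x1_smooth q
    rw [h _ MS.x1_smooth q, MS.dd_x1, MS.dd_x1, hpr] at hx
    have hp := MS.key hu hv MS.p4_smooth q
    rw [h _ MS.p4_smooth q, MS.dd_p4, MS.dd_p4, hpr] at hp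
    norm_num at hx hp
    exact ⟨hp, hx⟩
  · intro h Ψ hΨ q
    have hk := MS.key hu hv hΨ q
    have hr := (MS.eqs_iff hu hv (MS.pr q)).1 (h (MS.pr q))
    rw [hr.1, hr.2] at hk
    simp at hk
    linarith
end

section
/- Let α ∈ ℝ and let u, v : ℝ² → ℝ be smooth functions of (x,y). Then the polynomial-valued function f(x,y,p) = α(p² + 2u(x,y)) satisfies the linear equation ∂_y f = (p − v_x)∂_x f − u_x ∂_p f + v_{xx} for all (x,y) ∈ ℝ² and all p ∈ ℝ if and only if 2α(u_y + v_x u_x) = v_{xx} everywhere. (This is the order k = 2 differential reduction of the Manakov–Santini system.) -/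
/-- Partial derivative in `x` of a function on `ℝ² = (x,y)`. -/
noncomputable def pdx (f : ℝ × ℝ → ℝ) (q : ℝ × ℝ) : ℝ :=
  deriv (fun s => f (s, q.2)) q.1

/-- Partial derivative in `y` of a function on `ℝ² = (x,y)`. -/
noncomputable def pdy (f : ℝ × ℝ → ℝ) (q : ℝ × ℝ) : ℝ :=
  deriv (fun s => f (q.1, s)) q.2

/-- Partial derivative in the spectral variable `p` of a function on `ℝ³ = (x,y,p)`. -/
noncomputable def pd3p (f : ℝ × ℝ × ℝ → ℝ) (r : ℝ × ℝ × ℝ) : ℝ :=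
  deriv (fun s => f (r.1, r.2.1, s)) r.2.2

/-- Order `k = 2` differential reduction of the Manakov–Santini system:
the polynomial `f(x,y,p) = α(p² + 2u)` solves
`∂_y f = (p − v_x)∂_x f − u_x ∂_p f + v_{xx}` if and only if
`2α(u_y + v_x u_x) = v_{xx}` everywhere. -/
theorem order_two_reduction (α : ℝ) (u v : ℝ × ℝ → ℝ)
    (hu : ContDiff ℝ (⊤ : ℕ∞) u) (hv : ContDiff ℝ (⊤ : ℕ∞) v) :
    (∀ r : ℝ × ℝ × ℝ,
        pd3y (fun s : ℝ × ℝ × ℝ => α * (s.2.2 ^ 2 + 2 * u (s.1, s.2.1))) r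
          = (r.2.2 - pdx v (r.1, r.2.1))
              * pd3x (fun s : ℝ × ℝ × ℝ => α * (s.2.2 ^ 2 + 2 * u (s.1, s.2.1))) r
            - pdx u (r.1, r.2.1)
              * pd3p (fun s : ℝ × ℝ × ℝ => α * (s.2.2 ^ 2 + 2 * u (s.1, s.2.1))) r
            + pdx (pdx v) (r.1, r.2.1))
    ↔ (∀ q : ℝ × ℝ, 2 * α * (pdy u q + pdx v q * pdx u q) = pdx (pdx v) q) := by
  have hud : Differentiable ℝ u := hu.differentiable (by simp)
  have hy : ∀ r : ℝ × ℝ × ℝ,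
      pd3y (fun s : ℝ × ℝ × ℝ => α * (s.2.2 ^ 2 + 2 * u (s.1, s.2.1))) r
        = 2 * α * pdy u (r.1, r.2.1) := by
    intro r
    have hg : DifferentiableAt ℝ (fun s : ℝ => u (r.1, s)) r.2.1 :=
      (hud _).comp _ (DifferentiableAt.prodMk (differentiableAt_const r.1) differentiableAt_id)
    have : (fun s : ℝ => α * (r.2.2 ^ 2 + 2 * u (r.1, s)))
        = fun s : ℝ => α * r.2.2 ^ 2 + (2 * α) * u (r.1, s) := by
      funext s; ring
    simp only [pd3y, this, deriv_fun_add (differentiableAt_const _) (hg.const_mul _),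
      deriv_const, deriv_const_mul _ hg, pdy]
    ring
  have hx : ∀ r : ℝ × ℝ × ℝ,
      pd3x (fun s : ℝ × ℝ × ℝ => α * (s.2.2 ^ 2 + 2 * u (s.1, s.2.1))) r
        = 2 * α * pdx u (r.1, r.2.1) := by
    intro r
    have hg : DifferentiableAt ℝ (fun s : ℝ => u (s, r.2.1)) r.1 :=
      (hud _).comp _ (DifferentiableAt.prodMk differentiableAt_id (differentiableAt_const r.2.1))
    have : (fun s : ℝ => α * (r.2.2 ^ 2 + 2 * u (s, r.2.1)))
        = fun s : ℝ => α * r.2.2 ^ 2 + (2 * α) * u (s, r.2.1) := by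
      funext s; ring
    simp only [pd3x, this, deriv_fun_add (differentiableAt_const _) (hg.const_mul _),
      deriv_const, deriv_const_mul _ hg, pdx]
    ring
  have hp : ∀ r : ℝ × ℝ × ℝ,
      pd3p (fun s : ℝ × ℝ × ℝ => α * (s.2.2 ^ 2 + 2 * u (s.1, s.2.1))) r
        = 2 * α * r.2.2 := by
    intro r
    have : (fun s : ℝ => α * (s ^ 2 + 2 * u (r.1, r.2.1)))
        = fun s : ℝ => α * s ^ 2 + α * (2 * u (r.1, r.2.1)) := by
      funext s; ring
    have hsq : DifferentiableAt ℝ (fun s : ℝ => s ^ 2) r.2.2 := by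
      simp [differentiableAt_pow]
    simp only [pd3p, this, deriv_fun_add ((hsq.const_mul _)) (differentiableAt_const _),
      deriv_const, deriv_const_mul _ hsq, deriv_pow_field]
    ring
  constructor
  · intro h q
    have := h (q.1, q.2, 0)
    rw [hy, hx, hp] at this
    simp only at this
    nlinarith [this]
  · intro h r
    rw [hy, hx, hp]
    have := h (r.1, r.2.1)
    nlinarith [this]
end

section
/- Let α ∈ ℝ and let u, v, u₂ : ℝ² → ℝ be smooth functions of (x,y) such that ∂_x u₂ = u_y + v_x u_x everywhere. Suppose the polynomial-valued function f(x,y,p) = α(p³ + 3p·u(x,y) + 3u₂(x,y)) satisfies the linear equation ∂_y f = (p − v_x)∂_x f − u_x ∂_p f + v_{xx} for all (x,y) ∈ ℝ² and all p ∈ ℝ. Then 3α( ∂_y(u_y + u_x v_x) + ∂_x(u_y v_x + u_x v_x² + u u_x) ) = v_{xxx} everywhere. (This is the order k = 3 differential reduction of the Manakov–Santini system.) -/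


private lemma hone : ((⊤:ℕ∞) : WithTop ℕ∞) ≠ 0 := by simp
private lemma htop1 : ((⊤:ℕ∞) : WithTop ℕ∞) + 1 ≤ ((⊤:ℕ∞) : WithTop ℕ∞) := by exact_mod_cast le_top

lemma hasDerivAt_slice_x {f : ℝ × ℝ → ℝ} (hf : Differentiable ℝ f) (q : ℝ × ℝ) :
    HasDerivAt (fun s => f (s, q.2)) (fderiv ℝ f q (1, 0)) q.1 := by
  have h := ((hf q).hasFDerivAt.comp (𝕜 := ℝ) q.1 (hasFDerivAt_prodMk_left q.1 q.2)).hasDerivAt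
  exact h

lemma hasDerivAt_slice_y {f : ℝ × ℝ → ℝ} (hf : Differentiable ℝ f) (q : ℝ × ℝ) :
    HasDerivAt (fun s => f (q.1, s)) (fderiv ℝ f q (0, 1)) q.2 := by
  have h := ((hf q).hasFDerivAt.comp (𝕜 := ℝ) q.2 (hasFDerivAt_prodMk_right q.1 q.2)).hasDerivAt
  exact h

lemma pdx_eq {f : ℝ × ℝ → ℝ} (hf : Differentiable ℝ f) (q : ℝ × ℝ) :
    pdx f q = fderiv ℝ f q (1, 0) := (hasDerivAt_slice_x hf q).deriv

lemma pdy_eq {f : ℝ × ℝ → ℝ} (hf : Differentiable ℝ f) (q : ℝ × ℝ) :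
    pdy f q = fderiv ℝ f q (0, 1) := (hasDerivAt_slice_y hf q).deriv

lemma hasDerivAt_pdx {f : ℝ × ℝ → ℝ} (hf : Differentiable ℝ f) (q : ℝ × ℝ) :
    HasDerivAt (fun s => f (s, q.2)) (pdx f q) q.1 := by
  rw [pdx_eq hf]; exact hasDerivAt_slice_x hf q

lemma hasDerivAt_pdy {f : ℝ × ℝ → ℝ} (hf : Differentiable ℝ f) (q : ℝ × ℝ) :
    HasDerivAt (fun s => f (q.1, s)) (pdy f q) q.2 := by
  rw [pdy_eq hf]; exact hasDerivAt_slice_y hf q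

lemma contDiff_pdx {f : ℝ × ℝ → ℝ} (hf : ContDiff ℝ (⊤:ℕ∞) f) : ContDiff ℝ (⊤:ℕ∞) (pdx f) := by
  have : pdx f = fun q => fderiv ℝ f q (1, 0) := funext (pdx_eq (hf.differentiable hone))
  rw [this]
  exact (hf.fderiv_right htop1).clm_apply contDiff_const

lemma contDiff_pdy {f : ℝ × ℝ → ℝ} (hf : ContDiff ℝ (⊤:ℕ∞) f) : ContDiff ℝ (⊤:ℕ∞) (pdy f) := by
  have : pdy f = fun q => fderiv ℝ f q (0, 1) := funext (pdy_eq (hf.differentiable hone))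
  rw [this]
  exact (hf.fderiv_right htop1).clm_apply contDiff_const

lemma pdy_pdx_comm {f : ℝ × ℝ → ℝ} (hf : ContDiff ℝ (⊤:ℕ∞) f) (q : ℝ × ℝ) :
    pdy (pdx f) q = pdx (pdy f) q := by
  have hd : Differentiable ℝ f := hf.differentiable hone
  have hf' : ContDiff ℝ (⊤:ℕ∞) (fderiv ℝ f) := hf.fderiv_right htop1
  have hd' : Differentiable ℝ (fderiv ℝ f) := hf'.differentiable hone
  have hx : HasFDerivAt (fderiv ℝ f) (fderiv ℝ (fderiv ℝ f) q) q := (hd' q).hasFDerivAt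
  have hsym := second_derivative_symmetric (fun y => (hd y).hasFDerivAt) hx
  have e1 : pdx f = fun z => fderiv ℝ f z (1, 0) := funext (pdx_eq hd)
  have e2 : pdy f = fun z => fderiv ℝ f z (0, 1) := funext (pdy_eq hd)
  have c1 : Differentiable ℝ (pdx f) := (contDiff_pdx hf).differentiable hone
  have c2 : Differentiable ℝ (pdy f) := (contDiff_pdy hf).differentiable hone
  rw [pdy_eq c1 q, pdx_eq c2 q, e1, e2]
  have key : ∀ w : ℝ × ℝ,
      fderiv ℝ (fun z => fderiv ℝ f z w) q = (fderiv ℝ (fderiv ℝ f) q).flip w := by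
    intro w
    have h := hx.clm_apply (hasFDerivAt_const w q)
    simpa using h.fderiv
  rw [key, key]
  simpa using hsym (0, 1) (1, 0)

/-- Order `k = 3` differential reduction of the Manakov–Santini system: if
`∂_x u₂ = u_y + v_x u_x` and the polynomial `f(x,y,p) = α(p³ + 3p u + 3u₂)` solves
`∂_y f = (p − v_x)∂_x f − u_x ∂_p f + v_{xx}`, then
`3α(∂_y(u_y + u_x v_x) + ∂_x(u_y v_x + u_x v_x² + u u_x)) = v_{xxx}` everywhere. -/
theorem order_three_reduction (α : ℝ) (u v u₂ : ℝ × ℝ → ℝ)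
    (hu : ContDiff ℝ (⊤ : ℕ∞) u) (hv : ContDiff ℝ (⊤ : ℕ∞) v)
    (hu₂ : ContDiff ℝ (⊤ : ℕ∞) u₂)
    (hrec : ∀ q : ℝ × ℝ, pdx u₂ q = pdy u q + pdx v q * pdx u q)
    (heq : ∀ r : ℝ × ℝ × ℝ,
        pd3y (fun s : ℝ × ℝ × ℝ =>
            α * (s.2.2 ^ 3 + 3 * s.2.2 * u (s.1, s.2.1) + 3 * u₂ (s.1, s.2.1))) r
          = (r.2.2 - pdx v (r.1, r.2.1))
              * pd3x (fun s : ℝ × ℝ × ℝ =>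
                  α * (s.2.2 ^ 3 + 3 * s.2.2 * u (s.1, s.2.1) + 3 * u₂ (s.1, s.2.1))) r
            - pdx u (r.1, r.2.1)
              * pd3p (fun s : ℝ × ℝ × ℝ =>
                  α * (s.2.2 ^ 3 + 3 * s.2.2 * u (s.1, s.2.1) + 3 * u₂ (s.1, s.2.1))) r
            + pdx (pdx v) (r.1, r.2.1)) :
    ∀ q : ℝ × ℝ,
      3 * α * (pdy (fun s => pdy u s + pdx u s * pdx v s) q
          + pdx (fun s => pdy u s * pdx v s + pdx u s * (pdx v s) ^ 2 + u s * pdx u s) q)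
        = pdx (pdx (pdx v)) q := by
  have huD : Differentiable ℝ u := hu.differentiable hone
  have hvD : Differentiable ℝ v := hv.differentiable hone
  have hu₂D : Differentiable ℝ u₂ := hu₂.differentiable hone
  -- the key pointwise identity from the p = 0 slice of the linear equation
  have star : ∀ q : ℝ × ℝ,
      3 * α * (pdy u₂ q + (pdy u q * pdx v q + pdx u q * (pdx v q) ^ 2 + u q * pdx u q))
        = pdx (pdx v) q := by
    intro q
    have Hy : HasDerivAt (fun s => α * ((0:ℝ) ^ 3 + 3 * (0:ℝ) * u (q.1, s) + 3 * u₂ (q.1, s)))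
        (α * (3 * (0:ℝ) * pdy u q + 3 * pdy u₂ q)) q.2 :=
      ((((hasDerivAt_pdy huD q).const_mul (3 * (0:ℝ))).const_add ((0:ℝ) ^ 3)).add
        ((hasDerivAt_pdy hu₂D q).const_mul 3)).const_mul α
    have Hx : HasDerivAt (fun s => α * ((0:ℝ) ^ 3 + 3 * (0:ℝ) * u (s, q.2) + 3 * u₂ (s, q.2)))
        (α * (3 * (0:ℝ) * pdx u q + 3 * pdx u₂ q)) q.1 :=
      ((((hasDerivAt_pdx huD q).const_mul (3 * (0:ℝ))).const_add ((0:ℝ) ^ 3)).add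
        ((hasDerivAt_pdx hu₂D q).const_mul 3)).const_mul α
    have Hp : HasDerivAt (fun s : ℝ => α * (s ^ 3 + 3 * s * u q + 3 * u₂ q))
        (α * ((3:ℕ) * (0:ℝ) ^ 2 + 3 * 1 * u q)) 0 :=
      (((hasDerivAt_pow 3 (0:ℝ)).add
        (((hasDerivAt_id (0:ℝ)).const_mul 3).mul_const (u q))).add_const (3 * u₂ q)).const_mul α
    have e_y : pd3y (fun s : ℝ × ℝ × ℝ =>
        α * (s.2.2 ^ 3 + 3 * s.2.2 * u (s.1, s.2.1) + 3 * u₂ (s.1, s.2.1))) (q.1, q.2, 0)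
        = α * (3 * (0:ℝ) * pdy u q + 3 * pdy u₂ q) := Hy.deriv
    have e_x : pd3x (fun s : ℝ × ℝ × ℝ =>
        α * (s.2.2 ^ 3 + 3 * s.2.2 * u (s.1, s.2.1) + 3 * u₂ (s.1, s.2.1))) (q.1, q.2, 0)
        = α * (3 * (0:ℝ) * pdx u q + 3 * pdx u₂ q) := Hx.deriv
    have e_p : pd3p (fun s : ℝ × ℝ × ℝ =>
        α * (s.2.2 ^ 3 + 3 * s.2.2 * u (s.1, s.2.1) + 3 * u₂ (s.1, s.2.1))) (q.1, q.2, 0)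
        = α * ((3:ℕ) * (0:ℝ) ^ 2 + 3 * 1 * u q) := Hp.deriv
    have h := heq (q.1, q.2, 0)
    simp only [e_y, e_x, e_p] at h
    have hr := hrec q
    linear_combination h - 3 * α * pdx v q * hr
  intro q
  -- smoothness of the auxiliary combination G
  have hG : ContDiff ℝ (⊤:ℕ∞)
      (fun s => pdy u s * pdx v s + pdx u s * (pdx v s) ^ 2 + u s * pdx u s) :=
    (((contDiff_pdy hu).mul (contDiff_pdx hv)).add
      ((contDiff_pdx hu).mul ((contDiff_pdx hv).pow 2))).add (hu.mul (contDiff_pdx hu))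
  have hGD : Differentiable ℝ
      (fun s => pdy u s * pdx v s + pdx u s * (pdx v s) ^ 2 + u s * pdx u s) :=
    hG.differentiable hone
  have hpdyu₂D : Differentiable ℝ (pdy u₂) := (contDiff_pdy hu₂).differentiable hone
  -- the x derivative of the star identity
  have Hsum : HasDerivAt
      (fun s => 3 * α * (pdy u₂ (s, q.2) +
        (pdy u (s, q.2) * pdx v (s, q.2) + pdx u (s, q.2) * (pdx v (s, q.2)) ^ 2
          + u (s, q.2) * pdx u (s, q.2))))
      (3 * α * (pdx (pdy u₂) q + pdx
        (fun s => pdy u s * pdx v s + pdx u s * (pdx v s) ^ 2 + u s * pdx u s) q)) q.1 :=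
    ((hasDerivAt_pdx hpdyu₂D q).add (hasDerivAt_pdx hGD q)).const_mul (3 * α)
  have hfun : (fun s : ℝ × ℝ => 3 * α * (pdy u₂ s +
      (pdy u s * pdx v s + pdx u s * (pdx v s) ^ 2 + u s * pdx u s)))
      = fun s => pdx (pdx v) s := funext star
  have key : 3 * α * (pdx (pdy u₂) q + pdx
      (fun s => pdy u s * pdx v s + pdx u s * (pdx v s) ^ 2 + u s * pdx u s) q)
      = pdx (pdx (pdx v)) q := by
    have h1 : pdx (fun s : ℝ × ℝ => 3 * α * (pdy u₂ s +
        (pdy u s * pdx v s + pdx u s * (pdx v s) ^ 2 + u s * pdx u s))) q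
        = 3 * α * (pdx (pdy u₂) q + pdx
          (fun s => pdy u s * pdx v s + pdx u s * (pdx v s) ^ 2 + u s * pdx u s) q) :=
      Hsum.deriv
    rw [← h1, hfun]
  have hswap : (fun s : ℝ × ℝ => pdy u s + pdx u s * pdx v s) = pdx u₂ := by
    funext s; rw [hrec s]; ring
  rw [hswap, pdy_pdx_comm hu₂ q, key]
end

section
/- Let k ≥ 4 be an integer, α, β ∈ ℝ with β ≠ 0, and let u, f₀, f₁, …, f_{k−3} : ℝ² → ℝ be smooth functions of (x,y). Define the polynomial-valued function f(x,y,p) = β p^k + kβ u(x,y) p^{k−2} − α p + Σ_{i=0}^{k−3} f_i(x,y) p^i. Then f satisfies ∂_y f = (p − α u) ∂_x f − u_x ∂_p f for all (x,y) ∈ ℝ² and all p ∈ ℝ if and only if the following hydrodynamic-type system holds everywhere: ∂_y u = (kβ)⁻¹ ∂_x f_{k−3} − α u ∂_x u; ∂_y f_{k−3} = ∂_x f_{k−4} − α u ∂_x f_{k−3} − k(k−2)β u ∂_x u; ∂_y f_i = ∂_x f_{i−1} − α u ∂_x f_i − (i+1) f_{i+1} ∂_x u for each i with 0 < i < k−3;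 and ∂_y f₀ = − α u ∂_x f₀ − (f₁ − α) ∂_x u. -/
/-- The degree-`k` polynomial `f = β p^k + kβ u p^{k−2} − α p + Σ_{i=0}^{k−3} f_i p^i`
appearing in the order-`k` reduction of the interpolating-system hierarchy. -/
noncomputable def redPoly (k : ℕ) (α β : ℝ) (u : ℝ × ℝ → ℝ) (F : ℕ → ℝ × ℝ → ℝ)
    (r : ℝ × ℝ × ℝ) : ℝ :=
  β * r.2.2 ^ k + (k : ℝ) * β * u (r.1, r.2.1) * r.2.2 ^ (k - 2) - α * r.2.2
    + ∑ i ∈ Finset.range (k - 2), F i (r.1, r.2.1) * r.2.2 ^ i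

/-- A polynomial function of `p` that vanishes identically has vanishing coefficients. -/
lemma sum_coeff_zero (N : ℕ) (c : ℕ → ℝ)
    (h : ∀ p : ℝ, ∑ j ∈ Finset.range N, c j * p ^ j = 0) :
    ∀ j < N, c j = 0 := by
  intro j hj
  have hpoly : (∑ i ∈ Finset.range N, Polynomial.C (c i) * Polynomial.X ^ i : Polynomial ℝ) = 0 := by
    apply Polynomial.funext
    intro p
    simpa [Polynomial.eval_finset_sum] using h p
  have hc := congrArg (fun P : Polynomial ℝ => P.coeff j) hpoly
  simpa [Polynomial.finset_sum_coeff, Polynomial.coeff_C_mul, Polynomial.coeff_X_pow, hj] using hc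

/-- The coefficient of `p^j` in `∂_y f − ((p − α u)∂_x f − u_x ∂_p f)` for `f = redPoly`. -/
noncomputable def redCoef (k : ℕ) (α β : ℝ) (u : ℝ × ℝ → ℝ) (F : ℕ → ℝ × ℝ → ℝ)
    (q : ℝ × ℝ) (j : ℕ) : ℝ :=
  (if j = k-2 then (k:ℝ) * β * pdy u q else 0) + (if j < k-2 then pdy (F j) q else 0)
  - (if 1 ≤ j then pdx (F (j-1)) q else 0)
  + α * u q * ((if j = k-2 then (k:ℝ) * β * pdx u q else 0)
      + (if j < k-2 then pdx (F j) q else 0))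
  + (if j = k-3 then (k:ℝ) * ((k:ℝ)-2) * β * u q * pdx u q else 0)
  - (if j = 0 then α * pdx u q else 0)
  + pdx u q * (if j < k-3 then ((j:ℝ)+1) * F (j+1) q else 0)

lemma pd3y_redPoly (k : ℕ) (α β : ℝ) (u : ℝ × ℝ → ℝ) (F : ℕ → ℝ × ℝ → ℝ)
    (hu : Differentiable ℝ u) (hF : ∀ i, i < k - 2 → Differentiable ℝ (F i))
    (q : ℝ × ℝ) (p : ℝ) :
    pd3y (redPoly k α β u F) (q.1, q.2, p)
      = (k:ℝ) * β * pdy u q * p ^ (k-2) + ∑ i ∈ Finset.range (k-2), pdy (F i) q * p ^ i := by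
  have h1 : HasDerivAt (fun s => u (q.1, s)) (pdy u q) q.2 :=
    (((hu (q.1, q.2)).comp q.2 ((differentiableAt_const q.1).prodMk differentiableAt_id))).hasDerivAt
  have h2 : ∀ i ∈ Finset.range (k-2),
      HasDerivAt (fun s => F i (q.1, s) * p ^ i) (pdy (F i) q * p ^ i) q.2 := by
    intro i hi
    exact ((((hF i (Finset.mem_range.1 hi)) (q.1, q.2)).comp q.2
      ((differentiableAt_const q.1).prodMk differentiableAt_id)).hasDerivAt).mul_const _
  have H : HasDerivAt
      (fun s => β * p ^ k + (k:ℝ) * β * u (q.1, s) * p ^ (k-2) - α * p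
        + ∑ i ∈ Finset.range (k-2), F i (q.1, s) * p ^ i)
      ((k:ℝ) * β * pdy u q * p ^ (k-2) + ∑ i ∈ Finset.range (k-2), pdy (F i) q * p ^ i) q.2 := by
    have hmul : HasDerivAt (fun s => (k:ℝ) * β * u (q.1, s) * p ^ (k-2))
        ((k:ℝ) * β * pdy u q * p ^ (k-2)) q.2 := by
      have := (h1.const_mul ((k:ℝ) * β)).mul_const (p ^ (k-2))
      simpa [mul_assoc] using this
    have := (((hasDerivAt_const q.2 (β * p ^ k)).add hmul).sub_const (α * p)).fun_add
      (HasDerivAt.fun_sum h2)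
    simpa using this
  exact H.deriv

lemma pd3x_redPoly (k : ℕ) (α β : ℝ) (u : ℝ × ℝ → ℝ) (F : ℕ → ℝ × ℝ → ℝ)
    (hu : Differentiable ℝ u) (hF : ∀ i, i < k - 2 → Differentiable ℝ (F i))
    (q : ℝ × ℝ) (p : ℝ) :
    pd3x (redPoly k α β u F) (q.1, q.2, p)
      = (k:ℝ) * β * pdx u q * p ^ (k-2) + ∑ i ∈ Finset.range (k-2), pdx (F i) q * p ^ i := by
  have h1 : HasDerivAt (fun s => u (s, q.2)) (pdx u q) q.1 :=
    (((hu (q.1, q.2)).comp q.1 (differentiableAt_id.prodMk (differentiableAt_const q.2)))).hasDerivAt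
  have h2 : ∀ i ∈ Finset.range (k-2),
      HasDerivAt (fun s => F i (s, q.2) * p ^ i) (pdx (F i) q * p ^ i) q.1 := by
    intro i hi
    exact ((((hF i (Finset.mem_range.1 hi)) (q.1, q.2)).comp q.1
      (differentiableAt_id.prodMk (differentiableAt_const q.2))).hasDerivAt).mul_const _
  have H : HasDerivAt
      (fun s => β * p ^ k + (k:ℝ) * β * u (s, q.2) * p ^ (k-2) - α * p
        + ∑ i ∈ Finset.range (k-2), F i (s, q.2) * p ^ i)
      ((k:ℝ) * β * pdx u q * p ^ (k-2) + ∑ i ∈ Finset.range (k-2), pdx (F i) q * p ^ i) q.1 := by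
    have hmul : HasDerivAt (fun s => (k:ℝ) * β * u (s, q.2) * p ^ (k-2))
        ((k:ℝ) * β * pdx u q * p ^ (k-2)) q.1 := by
      have := (h1.const_mul ((k:ℝ) * β)).mul_const (p ^ (k-2))
      simpa [mul_assoc] using this
    have := (((hasDerivAt_const q.1 (β * p ^ k)).add hmul).sub_const (α * p)).fun_add
      (HasDerivAt.fun_sum h2)
    simpa using this
  exact H.deriv

lemma pd3p_redPoly (k : ℕ) (α β : ℝ) (u : ℝ × ℝ → ℝ) (F : ℕ → ℝ × ℝ → ℝ)
    (q : ℝ × ℝ) (p : ℝ) :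
    pd3p (redPoly k α β u F) (q.1, q.2, p)
      = β * ((k:ℝ) * p ^ (k-1)) + (k:ℝ) * β * u q * (((k-2 : ℕ):ℝ) * p ^ (k-2-1)) - α
        + ∑ i ∈ Finset.range (k-2), F i q * ((i:ℝ) * p ^ (i-1)) := by
  have H : HasDerivAt
      (fun s => β * s ^ k + (k:ℝ) * β * u (q.1, q.2) * s ^ (k-2) - α * s
        + ∑ i ∈ Finset.range (k-2), F i (q.1, q.2) * s ^ i)
      (β * ((k:ℝ) * p ^ (k-1)) + (k:ℝ) * β * u q * (((k-2 : ℕ):ℝ) * p ^ (k-2-1)) - α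
        + ∑ i ∈ Finset.range (k-2), F i q * ((i:ℝ) * p ^ (i-1))) p := by
    have h1 := (hasDerivAt_pow k p).const_mul β
    have h2 : HasDerivAt (fun s : ℝ => (k:ℝ) * β * u (q.1, q.2) * s ^ (k-2))
        ((k:ℝ) * β * u q * (((k-2 : ℕ):ℝ) * p ^ (k-2-1))) p :=
      (hasDerivAt_pow (k-2) p).const_mul _
    have h3 : HasDerivAt (fun s : ℝ => α * s) α p := by
      simpa using (hasDerivAt_id p).const_mul α
    have h4 : ∀ i ∈ Finset.range (k-2),
        HasDerivAt (fun s : ℝ => F i (q.1, q.2) * s ^ i) (F i q * ((i:ℝ) * p ^ (i-1))) p :=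
      fun i _ => (hasDerivAt_pow i p).const_mul _
    exact ((h1.add h2).sub h3).add (HasDerivAt.fun_sum h4)
  exact H.deriv

lemma redCoef_sum (k : ℕ) (hk : 4 ≤ k) (α β : ℝ) (u : ℝ × ℝ → ℝ) (F : ℕ → ℝ × ℝ → ℝ)
    (q : ℝ × ℝ) (p : ℝ) :
    ∑ j ∈ Finset.range (k-1), redCoef k α β u F q j * p ^ j
      = ((k:ℝ) * β * pdy u q * p ^ (k-2) + ∑ i ∈ Finset.range (k-2), pdy (F i) q * p ^ i)
        - ((p - α * u q) * ((k:ℝ) * β * pdx u q * p ^ (k-2)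
              + ∑ i ∈ Finset.range (k-2), pdx (F i) q * p ^ i)
           - pdx u q * (β * ((k:ℝ) * p ^ (k-1))
              + (k:ℝ) * β * u q * (((k-2 : ℕ):ℝ) * p ^ (k-2-1)) - α
              + ∑ i ∈ Finset.range (k-2), F i q * ((i:ℝ) * p ^ (i-1)))) := by
  have hsingle : ∀ (m : ℕ) (a : ℝ), m < k-1 →
      ∑ j ∈ Finset.range (k-1), (if j = m then a else 0) * p ^ j = a * p ^ m := by
    intro m a hm
    rw [Finset.sum_eq_single m]
    · simp
    · intro b _ hb; simp [hb]
    · intro hmem; exact absurd (Finset.mem_range.2 hm) hmem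
  have hlt : ∀ g : ℕ → ℝ,
      ∑ j ∈ Finset.range (k-1), (if j < k-2 then g j else 0) * p ^ j
        = ∑ i ∈ Finset.range (k-2), g i * p ^ i := by
    intro g
    rw [show k-1 = (k-2)+1 by omega, Finset.sum_range_succ]
    simp only [lt_irrefl, if_false, zero_mul, add_zero]
    exact Finset.sum_congr rfl fun j hj => by rw [if_pos (Finset.mem_range.1 hj)]
  have hshift : ∑ j ∈ Finset.range (k-1), (if 1 ≤ j then pdx (F (j-1)) q else 0) * p ^ j
        = ∑ i ∈ Finset.range (k-2), pdx (F i) q * p ^ (i+1) := by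
    rw [show k-1 = (k-2)+1 by omega, Finset.sum_range_succ']
    simp
  have hlt3 : ∑ j ∈ Finset.range (k-1),
        pdx u q * (if j < k-3 then ((j:ℝ)+1) * F (j+1) q else 0) * p ^ j
        = pdx u q * ∑ i ∈ Finset.range (k-2), F i q * ((i:ℝ) * p ^ (i-1)) := by
    rw [Finset.mul_sum, show k-2 = (k-3)+1 by omega, Finset.sum_range_succ']
    simp only [Nat.cast_zero, zero_mul, mul_zero, add_zero, Nat.add_sub_cancel]
    rw [show k-1 = ((k-3)+1)+1 by omega, Finset.sum_range_succ, Finset.sum_range_succ]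
    have h1 : ¬ ((k-3)+1 < k-3) := by omega
    have h2 : ¬ (k-3 < k-3) := by omega
    rw [if_neg h1, if_neg h2]
    simp only [mul_zero, zero_mul, add_zero]
    refine Finset.sum_congr rfl fun j hj => ?_
    rw [if_pos (Finset.mem_range.1 hj)]
    push_cast
    ring
  have hexpand : ∀ j ∈ Finset.range (k-1), redCoef k α β u F q j * p ^ j
      = ((if j = k-2 then (k:ℝ) * β * pdy u q else 0) * p ^ j
          + (if j < k-2 then pdy (F j) q else 0) * p ^ j
          - (if 1 ≤ j then pdx (F (j-1)) q else 0) * p ^ j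
          + (α * u q * ((if j = k-2 then (k:ℝ) * β * pdx u q else 0) * p ^ j)
             + α * u q * ((if j < k-2 then pdx (F j) q else 0) * p ^ j))
          + (if j = k-3 then (k:ℝ) * ((k:ℝ)-2) * β * u q * pdx u q else 0) * p ^ j
          - (if j = 0 then α * pdx u q else 0) * p ^ j
          + pdx u q * (if j < k-3 then ((j:ℝ)+1) * F (j+1) q else 0) * p ^ j) := by
    intro j _
    simp only [redCoef]
    ring
  rw [Finset.sum_congr rfl hexpand]
  simp only [Finset.sum_add_distrib, Finset.sum_sub_distrib, ← Finset.mul_sum]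
  rw [hsingle (k-2) ((k:ℝ) * β * pdy u q) (by omega),
      hsingle (k-2) ((k:ℝ) * β * pdx u q) (by omega),
      hsingle (k-3) ((k:ℝ) * ((k:ℝ)-2) * β * u q * pdx u q) (by omega),
      hsingle 0 (α * pdx u q) (by omega),
      hlt (fun j => pdy (F j) q), hlt (fun j => pdx (F j) q), hshift, hlt3]
  have hc : ((k-2 : ℕ):ℝ) = (k:ℝ) - 2 := by
    rw [Nat.cast_sub (by omega)]; norm_num
  have hp1 : p ^ (k-1) = p ^ (k-2) * p := by
    rw [← pow_succ]; congr 1; omega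
  have hp2 : p ^ (k-2-1) = p ^ (k-3) := by congr 1
  have hmul : (p - α * u q) * ∑ i ∈ Finset.range (k-2), pdx (F i) q * p ^ i
      = ∑ i ∈ Finset.range (k-2), pdx (F i) q * p ^ (i+1)
        - α * u q * ∑ i ∈ Finset.range (k-2), pdx (F i) q * p ^ i := by
    rw [sub_mul, Finset.mul_sum]
    congr 1
    exact Finset.sum_congr rfl fun i _ => by rw [pow_succ]; ring
  rw [mul_add (p - α * u q), hmul, hc, hp1, hp2]
  ring

lemma redCoef_iff (k : ℕ) (hk : 4 ≤ k) (α β : ℝ) (hβ : β ≠ 0)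
    (u : ℝ × ℝ → ℝ) (F : ℕ → ℝ × ℝ → ℝ) (q : ℝ × ℝ) :
    (∀ j < k-1, redCoef k α β u F q j = 0)
    ↔ (pdy u q = ((k : ℝ) * β)⁻¹ * pdx (F (k - 3)) q - α * u q * pdx u q
        ∧ pdy (F (k - 3)) q
            = pdx (F (k - 4)) q - α * u q * pdx (F (k - 3)) q
              - (k : ℝ) * ((k : ℝ) - 2) * β * u q * pdx u q
        ∧ (∀ i : ℕ, 0 < i → i < k - 3 →
            pdy (F i) q
              = pdx (F (i - 1)) q - α * u q * pdx (F i) q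
                - ((i : ℝ) + 1) * F (i + 1) q * pdx u q)
        ∧ pdy (F 0) q = -(α * u q) * pdx (F 0) q - (F 1 q - α) * pdx u q) := by
  have hkR : (k:ℝ) ≠ 0 := Nat.cast_ne_zero.2 (by omega)
  have hkβ : (k:ℝ) * β ≠ 0 := mul_ne_zero hkR hβ
  constructor
  · intro h
    refine ⟨?_, ?_, ?_, ?_⟩
    · have h1 := h (k-2) (by omega)
      simp only [redCoef, show ¬(k-2 < k-2) from by omega, show (1:ℕ) ≤ k-2 from by omega,
        show k-2 ≠ k-3 from by omega, show k-2 ≠ 0 from by omega,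
        show ¬(k-2 < k-3) from by omega, show k-2-1 = k-3 from by omega,
        if_true, if_false, if_pos rfl] at h1
      field_simp
      linear_combination h1
    · have h1 := h (k-3) (by omega)
      simp only [redCoef, show k-3 ≠ k-2 from by omega, show k-3 < k-2 from by omega,
        show (1:ℕ) ≤ k-3 from by omega, show k-3 ≠ 0 from by omega,
        show ¬(k-3 < k-3) from by omega, show k-3-1 = k-4 from by omega,
        if_true, if_false, if_pos rfl] at h1
      linear_combination h1
    · intro i hi0 hi3
      have h1 := h i (by omega)
      simp only [redCoef, show i ≠ k-2 from by omega, show i < k-2 from by omega,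
        show (1:ℕ) ≤ i from by omega, show i ≠ k-3 from by omega,
        show i ≠ 0 from by omega, show i < k-3 from hi3,
        if_true, if_false] at h1
      linear_combination h1
    · have h1 := h 0 (by omega)
      simp only [redCoef, show (0:ℕ) ≠ k-2 from by omega, show (0:ℕ) < k-2 from by omega,
        show ¬((1:ℕ) ≤ 0) from by omega, show (0:ℕ) ≠ k-3 from by omega,
        show (0:ℕ) < k-3 from by omega, if_pos rfl,
        if_true, if_false] at h1
      linear_combination h1
  · rintro ⟨e1, e2, e3, e4⟩ j hj
    have e1' : (k:ℝ) * β * pdy u q = pdx (F (k-3)) q - (k:ℝ) * β * (α * u q * pdx u q) := by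
      rw [e1]; field_simp
    rcases eq_or_ne j (k-2) with rfl | hj2
    · simp only [redCoef, show ¬(k-2 < k-2) from by omega, show (1:ℕ) ≤ k-2 from by omega,
        show k-2 ≠ k-3 from by omega, show k-2 ≠ 0 from by omega,
        show ¬(k-2 < k-3) from by omega, show k-2-1 = k-3 from by omega,
        if_true, if_false, if_pos rfl]
      linear_combination e1'
    rcases eq_or_ne j (k-3) with rfl | hj3
    · simp only [redCoef, show k-3 ≠ k-2 from by omega, show k-3 < k-2 from by omega,
        show (1:ℕ) ≤ k-3 from by omega, show k-3 ≠ 0 from by omega,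
        show ¬(k-3 < k-3) from by omega, show k-3-1 = k-4 from by omega,
        if_true, if_false]
      linear_combination e2
    rcases eq_or_ne j 0 with rfl | hj0
    · simp only [redCoef, show (0:ℕ) ≠ k-2 from by omega, show (0:ℕ) < k-2 from by omega,
        show ¬((1:ℕ) ≤ 0) from by omega, show (0:ℕ) ≠ k-3 from by omega,
        show (0:ℕ) < k-3 from by omega, if_pos rfl, if_true, if_false]
      linear_combination e4
    · have hmid := e3 j (by omega) (by omega)
      simp only [redCoef, show j ≠ k-2 from by omega, show j < k-2 from by omega,
        show (1:ℕ) ≤ j from by omega, hj3, hj0,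
        show j < k-3 from by omega, if_true, if_false]
      linear_combination hmid

/-- For `k ≥ 4`, the polynomial `f = β p^k + kβ u p^{k−2} − α p + Σ_{i=0}^{k−3} f_i p^i`
solves `∂_y f = (p − α u)∂_x f − u_x ∂_p f` if and only if the coefficients `u`, `f_i`
satisfy the stated closed system of hydrodynamic type. -/
theorem order_k_reduction_hydrodynamic_system (k : ℕ) (hk : 4 ≤ k) (α β : ℝ) (hβ : β ≠ 0)
    (u : ℝ × ℝ → ℝ) (F : ℕ → ℝ × ℝ → ℝ) (hu : ContDiff ℝ (⊤ : ℕ∞) u)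
    (hF : ∀ i ≤ k - 3, ContDiff ℝ (⊤ : ℕ∞) (F i)) :
    (∀ r : ℝ × ℝ × ℝ,
        pd3y (redPoly k α β u F) r
          = (r.2.2 - α * u (r.1, r.2.1)) * pd3x (redPoly k α β u F) r
            - pdx u (r.1, r.2.1) * pd3p (redPoly k α β u F) r)
    ↔ (∀ q : ℝ × ℝ,
        pdy u q = ((k : ℝ) * β)⁻¹ * pdx (F (k - 3)) q - α * u q * pdx u q
        ∧ pdy (F (k - 3)) q
            = pdx (F (k - 4)) q - α * u q * pdx (F (k - 3)) q
              - (k : ℝ) * ((k : ℝ) - 2) * β * u q * pdx u q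
        ∧ (∀ i : ℕ, 0 < i → i < k - 3 →
            pdy (F i) q
              = pdx (F (i - 1)) q - α * u q * pdx (F i) q
                - ((i : ℝ) + 1) * F (i + 1) q * pdx u q)
        ∧ pdy (F 0) q = -(α * u q) * pdx (F 0) q - (F 1 q - α) * pdx u q) := by
  have hud : Differentiable ℝ u := hu.differentiable (by norm_num)
  have hFd : ∀ i, i < k - 2 → Differentiable ℝ (F i) :=
    fun i hi => (hF i (by omega)).differentiable (by norm_num)
  constructor
  · intro h q
    apply (redCoef_iff k hk α β hβ u F q).1
    apply sum_coeff_zero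
    intro p
    rw [redCoef_sum k hk α β u F q p,
      ← pd3y_redPoly k α β u F hud hFd q p,
      ← pd3x_redPoly k α β u F hud hFd q p,
      ← pd3p_redPoly k α β u F q p, sub_eq_zero]
    exact h (q.1, q.2, p)
  · intro h r
    have hc := (redCoef_iff k hk α β hβ u F (r.1, r.2.1)).2 (h (r.1, r.2.1))
    have hzero : ∑ j ∈ Finset.range (k-1),
        redCoef k α β u F (r.1, r.2.1) j * r.2.2 ^ j = 0 :=
      Finset.sum_eq_zero fun j hj => by rw [hc j (Finset.mem_range.1 hj), zero_mul]
    have key := redCoef_sum k hk α β u F (r.1, r.2.1) r.2.2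
    rw [hzero, ← pd3y_redPoly k α β u F hud hFd (r.1, r.2.1) r.2.2,
      ← pd3x_redPoly k α β u F hud hFd (r.1, r.2.1) r.2.2,
      ← pd3p_redPoly k α β u F (r.1, r.2.1) r.2.2] at key
    exact sub_eq_zero.mp key.symm
end

section
/- Let N ≥ 1, let α, c₁, …, c_N ∈ ℝ with Σᵢ cᵢ = 0, and let w₁, …, w_N : ℝ² → ℝ be smooth functions of (x,y). Set u = Σ_{j=1}^N c_j w_j. Suppose that for every i, ∂_y wᵢ = ( wᵢ − α u ) ∂_x wᵢ + ∂_x u holds everywhere. Then for every (x,y) ∈ ℝ² and every p ∈ ℝ with p > max_i wᵢ(x,y), the function L(x,y,p) = p − Σᵢ cᵢ ln(p − wᵢ(x,y)) satisfies the y-flow Lax equation of the interpolating-system hierarchy: ∂_y L = (p − α u) ∂_x L − (∂_x u) ∂_p L. -/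
/-- The waterbag Lax function `L(x,y,p) = p − Σᵢ cᵢ ln(p − wᵢ(x,y))`. -/
noncomputable def waterbagL {N : ℕ} (c : Fin N → ℝ) (w : Fin N → ℝ × ℝ → ℝ)
    (r : ℝ × ℝ × ℝ) : ℝ :=
  r.2.2 - ∑ i, c i * Real.log (r.2.2 - w i (r.1, r.2.1))

/-- If the waterbag fields `wᵢ` satisfy the hydrodynamic-type system
`∂_y wᵢ = (wᵢ − α u)∂_x wᵢ + ∂_x u` with `u = Σⱼ cⱼ wⱼ`, then the waterbag Lax function
`L = p − Σᵢ cᵢ ln(p − wᵢ)` satisfies the `y`-flow Lax equation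
`∂_y L = (p − α u)∂_x L − u_x ∂_p L` wherever `p > maxᵢ wᵢ`. -/
theorem waterbag_y_flow (N : ℕ) (hN : 1 ≤ N) (α : ℝ) (c : Fin N → ℝ)
    (hc : ∑ i, c i = 0) (w : Fin N → ℝ × ℝ → ℝ)
    (hw : ∀ i, ContDiff ℝ (⊤ : ℕ∞) (w i))
    (u : ℝ × ℝ → ℝ) (hu : ∀ q : ℝ × ℝ, u q = ∑ j, c j * w j q)
    (hflow : ∀ i, ∀ q : ℝ × ℝ,
      pdy (w i) q = (w i q - α * u q) * pdx (w i) q + pdx u q) :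
    ∀ q : ℝ × ℝ, ∀ p : ℝ, (∀ i, w i q < p) →
      pd3y (waterbagL c w) (q.1, q.2, p)
        = (p - α * u q) * pd3x (waterbagL c w) (q.1, q.2, p)
          - pdx u q * pd3p (waterbagL c w) (q.1, q.2, p) := by
  intro q p hp
  have hne : ∀ i, p - w i q ≠ 0 := fun i => sub_ne_zero.mpr (ne_of_gt (hp i))
  have hdx : ∀ i, HasDerivAt (fun s => w i (s, q.2)) (pdx (w i) q) q.1 := by
    intro i
    have h1 : DifferentiableAt ℝ (fun s : ℝ => w i (s, q.2)) q.1 :=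
      ((hw i).differentiable (by simp) (q.1, q.2)).comp q.1
        (differentiableAt_id.prodMk (differentiableAt_const _))
    exact h1.hasDerivAt
  have hdy : ∀ i, HasDerivAt (fun s => w i (q.1, s)) (pdy (w i) q) q.2 := by
    intro i
    have h1 : DifferentiableAt ℝ (fun s : ℝ => w i (q.1, s)) q.2 :=
      ((hw i).differentiable (by simp) (q.1, q.2)).comp q.2
        ((differentiableAt_const _).prodMk differentiableAt_id)
    exact h1.hasDerivAt
  have hUd : HasDerivAt (fun s => u (s, q.2)) (∑ j, c j * pdx (w j) q) q.1 := by
    have hfun : (fun s => u (s, q.2)) = fun s => ∑ j, c j * w j (s, q.2) :=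
      funext fun s => hu (s, q.2)
    rw [hfun]
    exact HasDerivAt.fun_sum fun j _ => (hdx j).const_mul (c j)
  have eU : pdx u q = ∑ j, c j * pdx (w j) q := hUd.deriv
  have hX : HasDerivAt (fun s => waterbagL c w (s, q.2, p))
      (0 - ∑ i, c i * ((0 - pdx (w i) q) / (p - w i q))) q.1 := by
    refine (hasDerivAt_const q.1 p).sub (HasDerivAt.fun_sum fun i _ => ?_)
    exact (((hasDerivAt_const q.1 p).sub (hdx i)).log (hne i)).const_mul (c i)
  have hY : HasDerivAt (fun s => waterbagL c w (q.1, s, p))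
      (0 - ∑ i, c i * ((0 - pdy (w i) q) / (p - w i q))) q.2 := by
    refine (hasDerivAt_const q.2 p).sub (HasDerivAt.fun_sum fun i _ => ?_)
    exact (((hasDerivAt_const q.2 p).sub (hdy i)).log (hne i)).const_mul (c i)
  have hP : HasDerivAt (fun s => waterbagL c w (q.1, q.2, s))
      (1 - ∑ i, c i * ((1 - 0) / (p - w i q))) p := by
    refine (hasDerivAt_id p).sub (HasDerivAt.fun_sum fun i _ => ?_)
    exact (((hasDerivAt_id p).sub (hasDerivAt_const p _)).log (hne i)).const_mul (c i)
  have eX : pd3x (waterbagL c w) (q.1, q.2, p)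
      = 0 - ∑ i, c i * ((0 - pdx (w i) q) / (p - w i q)) := hX.deriv
  have eY : pd3y (waterbagL c w) (q.1, q.2, p)
      = 0 - ∑ i, c i * ((0 - pdy (w i) q) / (p - w i q)) := hY.deriv
  have eP : pd3p (waterbagL c w) (q.1, q.2, p)
      = 1 - ∑ i, c i * ((1 - 0) / (p - w i q)) := hP.deriv
  rw [eX, eY, eP, eU]
  have key : ∀ i ∈ (Finset.univ : Finset (Fin N)),
      c i * ((0 - pdy (w i) q) / (p - w i q))
        = (p - α * u q) * (c i * ((0 - pdx (w i) q) / (p - w i q)))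
            - (∑ j, c j * pdx (w j) q) * (c i * ((1 - 0) / (p - w i q)))
            + c i * pdx (w i) q := by
    intro i _
    rw [hflow i q, eU]
    have h := hne i
    field_simp
    ring
  rw [Finset.sum_congr rfl key, Finset.sum_add_distrib, Finset.sum_sub_distrib,
    ← Finset.mul_sum, ← Finset.mul_sum]
  ring
end

section
/- Let α ∈ ℝ and let u, w : ℝ² → ℝ be smooth functions of (x,y) satisfying the hydrodynamic-type system ∂_y w = ∂_x( w²/2 + u ) − α u ∂_x w and ∂_y u = ∂_x( w u ) − α u ∂_x u everywhere. Then for every (x,y) ∈ ℝ² and every p ∈ ℝ with p ≠ w(x,y), the rational function L(x,y,p) = p + u(x,y)/(p − w(x,y)) satisfies the y-flow Lax equation of the interpolating-system hierarchy: ∂_y L = (p − α u) ∂_x L − (∂_x u) ∂_p L. -/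
/-- The Zakharov-type rational Lax function `L(x,y,p) = p + u(x,y)/(p − w(x,y))`. -/
noncomputable def zakharovL (u w : ℝ × ℝ → ℝ) (r : ℝ × ℝ × ℝ) : ℝ :=
  r.2.2 + u (r.1, r.2.1) / (r.2.2 - w (r.1, r.2.1))

lemma hdx (f : ℝ × ℝ → ℝ) (hf : ContDiff ℝ (⊤ : ℕ∞) f) (q : ℝ × ℝ) :
    HasDerivAt (fun s => f (s, q.2)) (pdx f q) q.1 := by
  have : DifferentiableAt ℝ (fun s => f (s, q.2)) q.1 :=
    (hf.differentiable (by simp)).comp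
      ((differentiable_id).prodMk (differentiable_const q.2)) |>.differentiableAt
  exact this.hasDerivAt

lemma hdy (f : ℝ × ℝ → ℝ) (hf : ContDiff ℝ (⊤ : ℕ∞) f) (q : ℝ × ℝ) :
    HasDerivAt (fun s => f (q.1, s)) (pdy f q) q.2 := by
  have : DifferentiableAt ℝ (fun s => f (q.1, s)) q.2 :=
    (hf.differentiable (by simp)).comp
      ((differentiable_const q.1).prodMk differentiable_id) |>.differentiableAt
  exact this.hasDerivAt

/-- If `u`, `w` satisfy the hydrodynamic-type system
`∂_y w = ∂_x(w²/2 + u) − α u ∂_x w`, `∂_y u = ∂_x(w u) − α u ∂_x u`, then the rational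
Lax function `L = p + u/(p − w)` satisfies the `y`-flow Lax equation of the
interpolating-system hierarchy `∂_y L = (p − α u)∂_x L − u_x ∂_p L` wherever `p ≠ w`. -/
theorem zakharov_y_flow (α : ℝ) (u w : ℝ × ℝ → ℝ)
    (hu : ContDiff ℝ (⊤ : ℕ∞) u) (hw : ContDiff ℝ (⊤ : ℕ∞) w)
    (h1 : ∀ q : ℝ × ℝ,
      pdy w q = pdx (fun s => (w s) ^ 2 / 2 + u s) q - α * u q * pdx w q)
    (h2 : ∀ q : ℝ × ℝ,
      pdy u q = pdx (fun s => w s * u s) q - α * u q * pdx u q) :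
    ∀ q : ℝ × ℝ, ∀ p : ℝ, p ≠ w q →
      pd3y (zakharovL u w) (q.1, q.2, p)
        = (p - α * u q) * pd3x (zakharovL u w) (q.1, q.2, p)
          - pdx u q * pd3p (zakharovL u w) (q.1, q.2, p) := by
  intro q p hp
  obtain ⟨x, y⟩ := q
  have hden : p - w (x, y) ≠ 0 := sub_ne_zero.mpr hp
  set ux := pdx u (x, y) with hux
  set wx := pdx w (x, y) with hwx
  set uy := pdy u (x, y) with huy
  set wy := pdy w (x, y) with hwy
  have hux' : HasDerivAt (fun s => u (s, y)) ux x := hdx u hu (x, y)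
  have hwx' : HasDerivAt (fun s => w (s, y)) wx x := hdx w hw (x, y)
  have huy' : HasDerivAt (fun s => u (x, s)) uy y := hdy u hu (x, y)
  have hwy' : HasDerivAt (fun s => w (x, s)) wy y := hdy w hw (x, y)
  -- expand h1
  have e1 : wy = w (x, y) * wx + ux - α * u (x, y) * wx := by
    have h := h1 (x, y)
    have : HasDerivAt (fun s : ℝ => (w (s, y)) ^ 2 / 2 + u (s, y))
        (w (x, y) * wx + ux) x := by
      have := ((hwx'.pow 2).div_const 2).add hux'
      convert this using 1
      · rfl
      · rfl
      · ext s; simp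
      simp [pow_two]
      ring
    rw [show pdx (fun s => (w s) ^ 2 / 2 + u s) (x, y) = w (x, y) * wx + ux from
      this.deriv] at h
    simpa [hwy] using h
  have e2 : uy = wx * u (x, y) + w (x, y) * ux - α * u (x, y) * ux := by
    have h := h2 (x, y)
    have : HasDerivAt (fun s : ℝ => w (s, y) * u (s, y))
        (wx * u (x, y) + w (x, y) * ux) x := hwx'.mul hux'
    rw [show pdx (fun s => w s * u s) (x, y) = wx * u (x, y) + w (x, y) * ux from
      this.deriv] at h
    simpa [huy] using h
  -- compute the three partials of L
  have hLx : HasDerivAt (fun s => zakharovL u w (s, y, p))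
      ((ux * (p - w (x, y)) - u (x, y) * (0 - wx)) / (p - w (x, y)) ^ 2) x := by
    have := (hasDerivAt_const x p).add
      (hux'.div ((hasDerivAt_const x p).sub hwx') hden)
    simpa [zakharovL, Pi.add_def, Pi.div_def, Pi.sub_def] using this
  have hLy : HasDerivAt (fun s => zakharovL u w (x, s, p))
      ((uy * (p - w (x, y)) - u (x, y) * (0 - wy)) / (p - w (x, y)) ^ 2) y := by
    have := (hasDerivAt_const y p).add
      (huy'.div ((hasDerivAt_const y p).sub hwy') hden)
    simpa [zakharovL, Pi.add_def, Pi.div_def, Pi.sub_def] using this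
  have hLp : HasDerivAt (fun s => zakharovL u w (x, y, s))
      (1 + (0 * (p - w (x, y)) - u (x, y) * (1 - 0)) / (p - w (x, y)) ^ 2) p := by
    have := (hasDerivAt_id p).add
      ((hasDerivAt_const p (u (x, y))).div
        ((hasDerivAt_id p).sub (hasDerivAt_const p (w (x, y)))) hden)
    simpa [zakharovL, Pi.add_def, Pi.div_def, Pi.sub_def] using this
  have hx : pd3x (zakharovL u w) (x, y, p)
      = (ux * (p - w (x, y)) - u (x, y) * (0 - wx)) / (p - w (x, y)) ^ 2 := hLx.deriv
  have hy : pd3y (zakharovL u w) (x, y, p)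
      = (uy * (p - w (x, y)) - u (x, y) * (0 - wy)) / (p - w (x, y)) ^ 2 := hLy.deriv
  have hpd : pd3p (zakharovL u w) (x, y, p)
      = 1 + (0 * (p - w (x, y)) - u (x, y) * (1 - 0)) / (p - w (x, y)) ^ 2 := hLp.deriv
  rw [hx, hy, hpd, e1, e2]
  field_simp
  ring
end
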